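/- For every t > 0, a subset S of {1,...,n} of states is herdable if and only if there exists a vector k in range(W_c[0,t]) with k_i > 0 for all i in S; in particular, the system is completely herdable if and only if range(W_c[0,t]) contains an entrywise positive vector. -/

import Mathlib

open MeasureTheory

/-- The state of the LTI system `x' = A x + B u` at time `tf`, starting from `x0`
under the input `u`:  `x(tf) = exp(tf A) x0 + ∫_0^tf exp((tf-τ) A) B u(τ) dτ`. -/
noncomputable def stateAt {n m : ℕ} (A : Matrix (Fin n) (Fin n) ℝ) (B : Matrix (Fin n) (Fin m) ℝ)
    (x0 : Fin n → ℝ) (u : ℝ → Fin m → ℝ) (tf : ℝ) : Fin n → ℝ :=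
  (NormedSpace.exp (tf • A)).mulVec x0 +
    ∫ τ in (0:ℝ)..tf, (NormedSpace.exp ((tf - τ) • A) * B).mulVec (u τ)

/-- The input `u` is admissible (integrable) on `[0, tf]`. -/
def ValidInput {n m : ℕ} (A : Matrix (Fin n) (Fin n) ℝ) (B : Matrix (Fin n) (Fin m) ℝ)
    (tf : ℝ) (u : ℝ → Fin m → ℝ) : Prop :=
  IntervalIntegrable (fun τ => (NormedSpace.exp ((tf - τ) • A) * B).mulVec (u τ)) volume 0 tf

/-- A subset `S` of the states is herdable: from every initial condition and for every
threshold `h ≥ 0` there are a finite time `tf > 0` and an input driving every state in `S`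
at least to `h` at time `tf`. -/
def Herdable {n m : ℕ} (A : Matrix (Fin n) (Fin n) ℝ) (B : Matrix (Fin n) (Fin m) ℝ)
    (S : Set (Fin n)) : Prop :=
  ∀ x0 : Fin n → ℝ, ∀ h : ℝ, 0 ≤ h →
    ∃ tf : ℝ, 0 < tf ∧ ∃ u : ℝ → Fin m → ℝ, ValidInput A B tf u ∧
      ∀ i ∈ S, h ≤ stateAt A B x0 u tf i

/-- The controllability matrix `C = [B, AB, …, A^{n-1} B]`; the column indexed by
`(d, j)` is the `j`-th column of `A^d B`. -/
def ctrb {n m : ℕ} (A : Matrix (Fin n) (Fin n) ℝ) (B : Matrix (Fin n) (Fin m) ℝ) :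
    Matrix (Fin n) (Fin n × Fin m) ℝ := fun i p => (A ^ (p.1 : ℕ) * B) i p.2

/-- The controllability Grammian `W_c[0,t] = ∫_0^t exp(Aτ) B Bᵀ exp(Aᵀτ) dτ`,
defined entrywise. -/
noncomputable def gram {n m : ℕ} (A : Matrix (Fin n) (Fin n) ℝ) (B : Matrix (Fin n) (Fin m) ℝ)
    (t : ℝ) : Matrix (Fin n) (Fin n) ℝ := fun i k =>
  ∫ τ in (0:ℝ)..t,
    (NormedSpace.exp (τ • A) * B * B.transpose * NormedSpace.exp (τ • A.transpose)) i k

open MeasureTheory Matrix intervalIntegral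

namespace HerdAux

variable {n m : ℕ} (A : Matrix (Fin n) (Fin n) ℝ) (B : Matrix (Fin n) (Fin m) ℝ)

/-- `expB A B τ = exp(τA) B`. -/
noncomputable def expB (τ : ℝ) : Matrix (Fin n) (Fin m) ℝ := NormedSpace.exp (τ • A) * B

lemma contExp : Continuous fun τ : ℝ => NormedSpace.exp (τ • A) := by
  letI : NormedRing (Matrix (Fin n) (Fin n) ℝ) := Matrix.linftyOpNormedRing
  letI : NormedAlgebra ℝ (Matrix (Fin n) (Fin n) ℝ) := Matrix.linftyOpNormedAlgebra
  exact continuous_iff_continuousAt.2 fun x => ((NormedSpace.exp_analytic (𝕂 := ℝ) _).comp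
    (((ContinuousLinearMap.id ℝ ℝ).smulRight A).analyticAt x)).continuousAt

lemma contExpB : Continuous fun τ : ℝ => expB A B τ :=
  (contExp A).matrix_mul continuous_const

lemma analytic_exp_entry (i k : Fin n) :
    AnalyticOnNhd ℝ (fun τ : ℝ => NormedSpace.exp (τ • A) i k) Set.univ := by
  letI : NormedRing (Matrix (Fin n) (Fin n) ℝ) := Matrix.linftyOpNormedRing
  letI : NormedAlgebra ℝ (Matrix (Fin n) (Fin n) ℝ) := Matrix.linftyOpNormedAlgebra
  let L0 : Matrix (Fin n) (Fin n) ℝ →ₗ[ℝ] ℝ :=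
    { toFun := fun X => X i k
      map_add' := fun _ _ => rfl
      map_smul' := fun _ _ => rfl }
  let L : Matrix (Fin n) (Fin n) ℝ →L[ℝ] ℝ :=
    ⟨L0, (continuous_apply k).comp (continuous_apply i)⟩
  intro x _
  have h1 : AnalyticAt ℝ (fun τ : ℝ => NormedSpace.exp (τ • A)) x := by
    have h2 := (((ContinuousLinearMap.id ℝ ℝ).smulRight A).analyticAt x)
    exact (NormedSpace.exp_analytic _).comp h2
  exact (L.analyticAt _).comp h1

lemma analytic_expB_entry (i : Fin n) (j : Fin m) :
    AnalyticOnNhd ℝ (fun τ : ℝ => expB A B τ i j) Set.univ := by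
  have : (fun τ : ℝ => expB A B τ i j)
      = fun τ : ℝ => ∑ k, NormedSpace.exp (τ • A) i k * B k j := by
    funext τ; simp [expB, Matrix.mul_apply]
  rw [this]
  exact Finset.analyticOnNhd_fun_sum _ fun k _ =>
    (analytic_exp_entry A i k).mul analyticOnNhd_const


lemma gram_entry (t : ℝ) (i k : Fin n) :
    gram A B t i k = ∫ τ in (0:ℝ)..t, (expB A B τ * (expB A B τ)ᵀ) i k := by
  unfold _root_.gram
  congr 1; funext τ
  have h1 : NormedSpace.exp (τ • A.transpose) = (NormedSpace.exp (τ • A))ᵀ := by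
    rw [← Matrix.transpose_smul, Matrix.exp_transpose]
  rw [h1, expB, Matrix.transpose_mul, ← Matrix.mul_assoc]

lemma contMM (i k : Fin n) :
    Continuous fun τ : ℝ => (expB A B τ * (expB A B τ)ᵀ) i k :=
  ((contExpB A B).matrix_mul (contExpB A B).matrix_transpose).matrix_elem i k

set_option maxHeartbeats 1000000 in
lemma sum_sum_integral {p q : ℕ} {a b : ℝ} (w : ℝ → Matrix (Fin p) (Fin q) ℝ)
    (hw : ∀ i k, IntervalIntegrable (fun τ => w τ i k) volume a b)
    (z : Fin p → ℝ) (y : Fin q → ℝ) :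
    z ⬝ᵥ (Matrix.of fun i k => ∫ τ in a..b, w τ i k) *ᵥ y = ∫ τ in a..b, z ⬝ᵥ w τ *ᵥ y := by
  have hzy : ∀ i k, IntervalIntegrable (fun τ => z i * (w τ i k * y k)) volume a b :=
    fun i k => ((hw i k).mul_const _).const_mul _
  calc z ⬝ᵥ (Matrix.of fun i k => ∫ τ in a..b, w τ i k) *ᵥ y
      = ∑ i, ∑ k, z i * ((∫ τ in a..b, w τ i k) * y k) := by
        simp [dotProduct, Matrix.mulVec, Finset.mul_sum]
    _ = ∑ i, ∑ k, ∫ τ in a..b, z i * (w τ i k * y k) := by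
        refine Finset.sum_congr rfl fun i _ => Finset.sum_congr rfl fun k _ => ?_
        rw [intervalIntegral.integral_const_mul, intervalIntegral.integral_mul_const]
    _ = ∫ τ in a..b, ∑ i, ∑ k, z i * (w τ i k * y k) := by
        have h1 : ∀ i : Fin p, (∑ k, ∫ τ in a..b, z i * (w τ i k * y k))
            = ∫ τ in a..b, ∑ k, z i * (w τ i k * y k) :=
          fun i => (intervalIntegral.integral_finset_sum (fun k _ => hzy i k)).symm
        rw [Finset.sum_congr rfl fun i _ => h1 i]
        have h2 : ∀ i : Fin p,
            IntervalIntegrable (fun τ => ∑ k, z i * (w τ i k * y k)) volume a b := by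
          intro i
          have := IntervalIntegrable.sum (f := fun k τ => z i * (w τ i k * y k))
            Finset.univ (fun k _ => hzy i k)
          simpa [Finset.sum_fn] using this
        exact (intervalIntegral.integral_finset_sum
          (f := fun i τ => ∑ k, z i * (w τ i k * y k)) (fun i _ => h2 i)).symm
    _ = ∫ τ in a..b, z ⬝ᵥ w τ *ᵥ y := by
        refine intervalIntegral.integral_congr fun τ _ => ?_
        simp [dotProduct, Matrix.mulVec, Finset.mul_sum]

lemma gram_eq_of (t : ℝ) :
    gram A B t = Matrix.of fun i k => ∫ τ in (0:ℝ)..t, (expB A B τ * (expB A B τ)ᵀ) i k :=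
  Matrix.ext fun i k => gram_entry A B t i k

lemma dot_gram (t : ℝ) (z y : Fin n → ℝ) :
    z ⬝ᵥ (gram A B t) *ᵥ y
      = ∫ τ in (0:ℝ)..t, (z ᵥ* expB A B τ) ⬝ᵥ (y ᵥ* expB A B τ) := by
  rw [gram_eq_of, sum_sum_integral _
    (fun i k => (contMM A B i k).intervalIntegrable _ _)]
  refine intervalIntegral.integral_congr fun τ _ => ?_
  rw [← Matrix.mulVec_mulVec, Matrix.dotProduct_mulVec, Matrix.mulVec_transpose]

lemma gram_symm (t : ℝ) : (gram A B t)ᵀ = gram A B t := by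
  ext i k
  rw [Matrix.transpose_apply, gram_entry, gram_entry]
  refine intervalIntegral.integral_congr fun τ _ => ?_
  have h2 : (expB A B τ * (expB A B τ)ᵀ)ᵀ = expB A B τ * (expB A B τ)ᵀ := by
    rw [Matrix.transpose_mul, Matrix.transpose_transpose]
  conv_lhs => rw [← h2]
  simp

lemma integral_coord {a b : ℝ} (f : ℝ → Fin n → ℝ) (hf : IntervalIntegrable f volume a b)
    (i : Fin n) : (∫ τ in a..b, f τ) i = ∫ τ in a..b, f τ i :=
  ((ContinuousLinearMap.proj (R := ℝ) (φ := fun _ : Fin n => ℝ)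
    i).intervalIntegral_comp_comm hf).symm

lemma dot_integral {a b : ℝ} (z : Fin n → ℝ) (f : ℝ → Fin n → ℝ)
    (hf : IntervalIntegrable f volume a b) :
    z ⬝ᵥ (∫ τ in a..b, f τ) = ∫ τ in a..b, z ⬝ᵥ f τ := by
  have hi : ∀ i : Fin n, IntervalIntegrable (fun τ => f τ i) volume a b := fun i =>
    ⟨(ContinuousLinearMap.proj (R := ℝ) (φ := fun _ : Fin n => ℝ) i).integrable_comp hf.1,
     (ContinuousLinearMap.proj (R := ℝ) (φ := fun _ : Fin n => ℝ) i).integrable_comp hf.2⟩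
  calc z ⬝ᵥ (∫ τ in a..b, f τ) = ∑ i, z i * ∫ τ in a..b, f τ i := by
        simp [dotProduct, integral_coord f hf]
    _ = ∑ i, ∫ τ in a..b, z i * f τ i := by
        simp [intervalIntegral.integral_const_mul]
    _ = ∫ τ in a..b, ∑ i, z i * f τ i :=
        (intervalIntegral.integral_finset_sum fun i _ => (hi i).const_mul _).symm
    _ = ∫ τ in a..b, z ⬝ᵥ f τ := rfl

lemma contQ (z y : Fin n → ℝ) :
    Continuous fun τ : ℝ => (z ᵥ* expB A B τ) ⬝ᵥ (y ᵥ* expB A B τ) :=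
  (continuous_const.matrix_vecMul (contExpB A B)).dotProduct
    (continuous_const.matrix_vecMul (contExpB A B))

lemma analytic_vecMul_entry (z : Fin n → ℝ) (j : Fin m) :
    AnalyticOnNhd ℝ (fun τ : ℝ => (z ᵥ* expB A B τ) j) Set.univ := by
  have : (fun τ : ℝ => (z ᵥ* expB A B τ) j)
      = fun τ : ℝ => ∑ i, z i * expB A B τ i j := by
    funext τ; simp [Matrix.vecMul, dotProduct]
  rw [this]
  exact Finset.analyticOnNhd_fun_sum _ fun i _ =>
    analyticOnNhd_const.mul (analytic_expB_entry A B i j)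

lemma vecMul_expB_eq_zero {t : ℝ} (ht : 0 < t) {z : Fin n → ℝ}
    (hz : z ⬝ᵥ (gram A B t) *ᵥ z = 0) (s : ℝ) : z ᵥ* expB A B s = 0 := by
  set Q : ℝ → ℝ := fun τ => (z ᵥ* expB A B τ) ⬝ᵥ (z ᵥ* expB A B τ) with hQdef
  have hQc : Continuous Q := contQ A B z z
  have hQnn : ∀ τ, 0 ≤ Q τ := fun τ =>
    Finset.sum_nonneg fun j _ => mul_self_nonneg _
  have hint : ∫ τ in (0:ℝ)..t, Q τ = 0 := (dot_gram A B t z z).symm.trans hz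
  have hae := (intervalIntegral.integral_eq_zero_iff_of_le_of_nonneg_ae ht.le
    (Filter.Eventually.of_forall fun τ => hQnn τ)
    (hQc.intervalIntegrable _ _)).mp hint
  have hmeas : MeasurableSet {τ : ℝ | ¬ Q τ = 0} :=
    (isOpen_compl_singleton.preimage hQc).measurableSet
  have hnull : volume ({τ : ℝ | ¬ Q τ = 0} ∩ Set.Ioc 0 t) = 0 := by
    have h1 := hae
    rw [Filter.EventuallyEq, ae_iff] at h1
    simp only [Pi.zero_apply] at h1
    rw [Measure.restrict_apply hmeas] at h1
    exact h1
  have hzero : ∀ τ ∈ Set.Ioo (0:ℝ) t, Q τ = 0 := by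
    intro τ hτ
    by_contra hne
    have hU : IsOpen ({τ : ℝ | ¬ Q τ = 0} ∩ Set.Ioo 0 t) :=
      (isOpen_compl_singleton.preimage hQc).inter isOpen_Ioo
    have hpos := hU.measure_pos volume ⟨τ, hne, hτ⟩
    have hle : volume ({τ : ℝ | ¬ Q τ = 0} ∩ Set.Ioo 0 t) ≤ 0 := by
      rw [← hnull]
      exact measure_mono (Set.inter_subset_inter_right _ Set.Ioo_subset_Ioc_self)
    exact absurd (le_antisymm hle zero_le) hpos.ne'
  have hcoord : ∀ j : Fin m, ∀ τ ∈ Set.Ioo (0:ℝ) t, (z ᵥ* expB A B τ) j = 0 := by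
    intro j τ hτ
    have h2 : ∑ j', (z ᵥ* expB A B τ) j' * (z ᵥ* expB A B τ) j' = 0 := hzero τ hτ
    have := (Finset.sum_eq_zero_iff_of_nonneg
      (fun j' _ => mul_self_nonneg ((z ᵥ* expB A B τ) j'))).mp h2 j (Finset.mem_univ j)
    exact mul_self_eq_zero.mp this
  funext j
  have hA : AnalyticOnNhd ℝ (fun τ : ℝ => (z ᵥ* expB A B τ) j) Set.univ :=
    analytic_vecMul_entry A B z j
  have hev : (fun τ : ℝ => (z ᵥ* expB A B τ) j) =ᶠ[nhds (t/2)] 0 := by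
    have hmem : Set.Ioo (0:ℝ) t ∈ nhds (t/2) :=
      Ioo_mem_nhds (by linarith) (by linarith)
    exact Filter.eventuallyEq_of_mem hmem fun τ hτ => hcoord j τ hτ
  have := hA.eqOn_zero_of_preconnected_of_eventuallyEq_zero isPreconnected_univ
    (Set.mem_univ (t/2)) hev
  exact this (Set.mem_univ s)

lemma dot_reach {tf : ℝ} {u : ℝ → Fin m → ℝ} (hu : ValidInput A B tf u) {z : Fin n → ℝ}
    (hvm : ∀ s, z ᵥ* expB A B s = 0) :
    z ⬝ᵥ (∫ τ in (0:ℝ)..tf, (NormedSpace.exp ((tf - τ) • A) * B) *ᵥ u τ) = 0 := by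
  rw [dot_integral z _ hu]
  have hpt : ∀ τ : ℝ, z ⬝ᵥ ((NormedSpace.exp ((tf - τ) • A) * B) *ᵥ u τ) = 0 := by
    intro τ
    have h3 : z ᵥ* (NormedSpace.exp ((tf - τ) • A) * B) = 0 := hvm (tf - τ)
    simp only [Matrix.dotProduct_mulVec, h3, zero_dotProduct]
  simp only [hpt, intervalIntegral.integral_zero]

open RealInnerProductSpace in
lemma exists_mulVec_eq {N : ℕ} (W : Matrix (Fin N) (Fin N) ℝ) (hsym : Wᵀ = W)
    (r : Fin N → ℝ) (hr : ∀ z, W *ᵥ z = 0 → z ⬝ᵥ r = 0) : ∃ y, W *ᵥ y = r := by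
  classical
  set f : EuclideanSpace ℝ (Fin N) →ₗ[ℝ] EuclideanSpace ℝ (Fin N) :=
    Matrix.toEuclideanLin W with hfdef
  have happ : ∀ v : EuclideanSpace ℝ (Fin N), f v = W *ᵥ v := fun v => rfl
  have hinner : ∀ v w : EuclideanSpace ℝ (Fin N), ⟪v, w⟫ = v ⬝ᵥ w := by
    intro v w
    simp [PiLp.inner_apply, RCLike.inner_apply, dotProduct]
    exact Finset.sum_congr rfl fun _ _ => mul_comm _ _
  have hker : ∀ v : EuclideanSpace ℝ (Fin N), v ∈ LinearMap.ker f ↔ W *ᵥ v = 0 := by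
    intro v; rw [LinearMap.mem_ker, ← happ]; exact (WithLp.ofLp_eq_zero (p := 2)).symm
  have hle : LinearMap.range f ≤ (LinearMap.ker f)ᗮ := by
    rintro x ⟨v, rfl⟩
    rw [Submodule.mem_orthogonal]
    intro u hu
    rw [hinner, happ, Matrix.dotProduct_mulVec, ← Matrix.mulVec_transpose, hsym,
      (hker u).mp hu]
    exact zero_dotProduct _
  have heq : LinearMap.range f = (LinearMap.ker f)ᗮ := by
    apply Submodule.eq_of_le_of_finrank_eq hle
    have h1 := LinearMap.finrank_range_add_finrank_ker f
    have h2 := Submodule.finrank_add_finrank_orthogonal (K := LinearMap.ker f)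
    omega
  have hrmem : ((WithLp.equiv 2 (Fin N → ℝ)).symm r) ∈ (LinearMap.ker f)ᗮ := by
    rw [Submodule.mem_orthogonal]
    intro u hu
    rw [hinner]
    exact hr u ((hker u).mp hu)
  rw [← heq] at hrmem
  obtain ⟨y, hy⟩ := hrmem
  exact ⟨y, (happ y).symm.trans (congrArg WithLp.ofLp hy)⟩

lemma mulVec_integral_coord {p q : ℕ} {a b : ℝ} (w : ℝ → Matrix (Fin p) (Fin q) ℝ)
    (hw : ∀ i k, IntervalIntegrable (fun τ => w τ i k) volume a b)
    (y : Fin q → ℝ) (i : Fin p) :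
    ((Matrix.of fun i k => ∫ τ in a..b, w τ i k) *ᵥ y) i = ∫ τ in a..b, (w τ *ᵥ y) i := by
  have hk : ∀ k, IntervalIntegrable (fun τ => w τ i k * y k) volume a b :=
    fun k => (hw i k).mul_const _
  calc ((Matrix.of fun i k => ∫ τ in a..b, w τ i k) *ᵥ y) i
      = ∑ k, (∫ τ in a..b, w τ i k) * y k := by
        simp [Matrix.mulVec, dotProduct]
    _ = ∑ k, ∫ τ in a..b, w τ i k * y k := by
        refine Finset.sum_congr rfl fun k _ => ?_
        rw [intervalIntegral.integral_mul_const]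
    _ = ∫ τ in a..b, ∑ k, w τ i k * y k :=
        (intervalIntegral.integral_finset_sum (f := fun k τ => w τ i k * y k)
          (fun k _ => hk k)).symm
    _ = ∫ τ in a..b, (w τ *ᵥ y) i := by
        refine intervalIntegral.integral_congr fun τ _ => ?_
        simp [Matrix.mulVec, dotProduct]

lemma herdable_of_pos {t : ℝ} (ht : 0 < t) (S : Set (Fin n)) (y : Fin n → ℝ)
    (hk : ∀ i ∈ S, 0 < ((gram A B t) *ᵥ y) i) : Herdable A B S := by
  intro x0 h h0
  set a := (NormedSpace.exp (t • A)) *ᵥ x0 with hadef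
  set k := (gram A B t) *ᵥ y with hkdef
  obtain ⟨c0, hc0⟩ := Finset.exists_le
    ((Finset.univ : Finset (Fin n)).image fun i => (h - a i) / k i)
  set c := max c0 0 with hcdef
  set u : ℝ → Fin m → ℝ := fun τ => c • (y ᵥ* expB A B (t - τ)) with hudef
  have h1 : Continuous fun τ : ℝ => expB A B (t - τ) :=
    (contExpB A B).comp (continuous_const.sub continuous_id)
  have hcont : Continuous fun τ : ℝ => (NormedSpace.exp ((t - τ) • A) * B) *ᵥ u τ := by
    have hu' : Continuous u := (continuous_const.matrix_vecMul h1).const_smul c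
    exact h1.matrix_mulVec hu'
  have hF : ∀ τ : ℝ, (NormedSpace.exp ((t - τ) • A) * B) *ᵥ u τ
      = c • ((expB A B (t - τ) * (expB A B (t - τ))ᵀ) *ᵥ y) := by
    intro τ
    show expB A B (t - τ) *ᵥ (c • (y ᵥ* expB A B (t - τ))) = _
    rw [Matrix.mulVec_smul, ← Matrix.mulVec_transpose, Matrix.mulVec_mulVec]
  have hkey : ∀ i, (∫ τ in (0:ℝ)..t, (NormedSpace.exp ((t - τ) • A) * B) *ᵥ u τ) i
      = c * k i := by
    intro i
    rw [integral_coord _ (hcont.intervalIntegrable _ _) i]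
    calc ∫ τ in (0:ℝ)..t, ((NormedSpace.exp ((t - τ) • A) * B) *ᵥ u τ) i
        = ∫ τ in (0:ℝ)..t, c * ((expB A B (t - τ) * (expB A B (t - τ))ᵀ) *ᵥ y) i := by
          refine intervalIntegral.integral_congr fun τ _ => ?_
          rw [hF τ]; simp
      _ = c * ∫ τ in (0:ℝ)..t, ((expB A B (t - τ) * (expB A B (t - τ))ᵀ) *ᵥ y) i :=
          intervalIntegral.integral_const_mul _ _
      _ = c * ∫ σ in (0:ℝ)..t, ((expB A B σ * (expB A B σ)ᵀ) *ᵥ y) i := by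
          rw [intervalIntegral.integral_comp_sub_left
            (fun σ => ((expB A B σ * (expB A B σ)ᵀ) *ᵥ y) i) t]
          norm_num
      _ = c * k i := by
          rw [hkdef, gram_eq_of, mulVec_integral_coord _
            (fun i k => (contMM A B i k).intervalIntegrable _ _)]
  refine ⟨t, ht, u, hcont.intervalIntegrable 0 t, fun i hi => ?_⟩
  have hstate : stateAt A B x0 u t i = a i + c * k i := by
    show ((NormedSpace.exp (t • A)).mulVec x0
      + ∫ τ in (0:ℝ)..t, (NormedSpace.exp ((t - τ) • A) * B).mulVec (u τ)) i = _
    rw [Pi.add_apply, hkey i]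
  rw [hstate]
  have hki := hk i hi
  have hc0i : (h - a i) / k i ≤ c0 :=
    hc0 _ (Finset.mem_image_of_mem _ (Finset.mem_univ i))
  have hcc : (h - a i) / k i ≤ c := le_trans hc0i (le_max_left _ _)
  have hfin : h - a i ≤ c * k i := (div_le_iff₀ hki).mp hcc
  linarith

end HerdAux

/-- For every `t > 0`: a subset `S` of states is herdable iff the range of the
controllability Grammian `W_c[0,t]` contains a vector positive on `S`; in particular the
system is completely herdable iff that range contains an entrywise positive vector. -/
theorem herdable_iff_range_gram {n m : ℕ}
    (A : Matrix (Fin n) (Fin n) ℝ) (B : Matrix (Fin n) (Fin m) ℝ) :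
    ∀ t : ℝ, 0 < t →
      (∀ S : Set (Fin n),
        Herdable A B S ↔
          ∃ k : Fin n → ℝ, (∃ y : Fin n → ℝ, (gram A B t).mulVec y = k) ∧
            ∀ i ∈ S, 0 < k i) ∧
      (Herdable A B Set.univ ↔
        ∃ k : Fin n → ℝ, (∃ y : Fin n → ℝ, (gram A B t).mulVec y = k) ∧
          ∀ i : Fin n, 0 < k i) := by
  intro t ht
  have main : ∀ S : Set (Fin n), Herdable A B S ↔
      ∃ k : Fin n → ℝ, (∃ y : Fin n → ℝ, (gram A B t).mulVec y = k) ∧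
        ∀ i ∈ S, 0 < k i := by
    intro S
    constructor
    · intro hH
      obtain ⟨tf, htf, u, hu, hstate⟩ := hH 0 1 zero_le_one
      set r : Fin n → ℝ :=
        ∫ τ in (0:ℝ)..tf, (NormedSpace.exp ((tf - τ) • A) * B) *ᵥ u τ with hrdef
      have hr1 : ∀ i ∈ S, (1:ℝ) ≤ r i := by
        intro i hi
        have h2 := hstate i hi
        have h3 : stateAt A B 0 u tf i = r i := by
          simp only [stateAt, Matrix.mulVec_zero, zero_add, hrdef]
        rwa [h3] at h2
      refine ⟨r, HerdAux.exists_mulVec_eq _ (HerdAux.gram_symm A B t) r ?_,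
        fun i hi => lt_of_lt_of_le one_pos (hr1 i hi)⟩
      intro z hz
      have hzz : z ⬝ᵥ (gram A B t) *ᵥ z = 0 := by
        rw [hz, dotProduct_zero]
      exact HerdAux.dot_reach A B hu (HerdAux.vecMul_expB_eq_zero A B ht hzz)
    · rintro ⟨k, ⟨y, rfl⟩, hkpos⟩
      exact HerdAux.herdable_of_pos A B ht S y hkpos
  refine ⟨main, ?_⟩
  rw [main Set.univ]
  simp [Set.mem_univ]
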